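/- For every nonnegative integer n, P_n(x) = T(n,1) + Σ_{k=1}^{n+1} (1/k) T(n+1,k) x^k, where T(n,k) are the tangent numbers of order k. -/

import Mathlib

open Real Polynomial Set Finset

noncomputable def P : ℕ → Polynomial ℝ
  | 0 => Polynomial.X
  | n + 1 => (1 + Polynomial.X ^ 2) * Polynomial.derivative (P n)

noncomputable def T (n k : ℕ) : ℝ :=
  iteratedDeriv n (fun t : ℝ => Real.tan t ^ k) 0

namespace TangentAux

abbrev S : Set ℝ := Set.Ioo (-(π/2)) (π/2)

lemma h0S : (0 : ℝ) ∈ S := by constructor <;> simp [pi_pos, half_pos pi_pos]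

lemma hUS : UniqueDiffOn ℝ S := isOpen_Ioo.uniqueDiffOn

lemma cos_ne (x : ℝ) (hx : x ∈ S) : Real.cos x ≠ 0 :=
  (Real.cos_pos_of_mem_Ioo hx).ne'

lemma contDiffOn_tan_pow (m : ℕ) (k : ℕ) :
    ContDiffOn ℝ m (fun t : ℝ => Real.tan t ^ k) S := fun x hx =>
  ((Real.contDiffAt_tan.2 (cos_ne x hx)).pow k).contDiffWithinAt

lemma T_eq_within (n k : ℕ) :
    T n k = iteratedDerivWithin n (fun t : ℝ => Real.tan t ^ k) S 0 := by
  simp only [T, iteratedDeriv, iteratedDerivWithin]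
  rw [iteratedFDerivWithin_of_isOpen n isOpen_Ioo h0S]

lemma T_zero (k : ℕ) : T 0 k = (0 : ℝ) ^ k := by
  simp [T, Real.tan_zero]

lemma T_k_zero (n : ℕ) : T (n + 1) 0 = 0 := by
  have : (fun t : ℝ => Real.tan t ^ 0) = fun _ : ℝ => (1 : ℝ) := by
    funext t; simp
  have hz : ∀ m : ℕ, iteratedDeriv m (fun _ : ℝ => (0:ℝ)) = fun _ => 0 := by
    intro m
    induction m with
    | zero => simp
    | succ m ih => rw [iteratedDeriv_succ']; simp only [deriv_const']; exact ih
  rw [T, this, iteratedDeriv_succ']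
  simp only [deriv_const']
  rw [hz n]

lemma T_rec (n k : ℕ) :
    T (n + 1) (k + 1) = ((k : ℝ) + 1) * (T n k + T n (k + 2)) := by
  rw [T_eq_within, T_eq_within, T_eq_within,
    iteratedDerivWithin_succ']
  have hcongr : Set.EqOn (derivWithin (fun t : ℝ => Real.tan t ^ (k + 1)) S)
      (fun t : ℝ => ((k : ℝ) + 1) * (Real.tan t ^ k + Real.tan t ^ (k + 2))) S := by
    intro x hx
    have hc := cos_ne x hx
    rw [derivWithin_of_isOpen isOpen_Ioo hx]
    have hd := ((Real.hasDerivAt_tan hc).fun_pow (k + 1)).deriv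
    simp only [Nat.add_sub_cancel] at hd
    rw [hd]
    have h1 : 1 / Real.cos x ^ 2 = 1 + Real.tan x ^ 2 := by
      rw [one_div, ← Real.inv_one_add_tan_sq hc, inv_inv]
    rw [h1]; push_cast; ring
  rw [iteratedDerivWithin_congr hcongr h0S]
  rw [iteratedDerivWithin_const_mul h0S hUS _
    (((contDiffOn_tan_pow n k).add (contDiffOn_tan_pow n (k + 2))) 0 h0S)]
  rw [show (fun t : ℝ => Real.tan t ^ k + Real.tan t ^ (k + 2)) =
      (fun t : ℝ => Real.tan t ^ k) + (fun t : ℝ => Real.tan t ^ (k + 2)) from rfl]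
  rw [iteratedDerivWithin_add h0S hUS (contDiffOn_tan_pow n k 0 h0S) (contDiffOn_tan_pow n (k + 2) 0 h0S)]

lemma coeff_P_succ (n k : ℕ) :
    (P (n + 1)).coeff k = (derivative (P n)).coeff k +
      (if 2 ≤ k then (derivative (P n)).coeff (k - 2) else 0) := by
  show ((1 + Polynomial.X ^ 2) * derivative (P n)).coeff k = _
  rw [add_mul, one_mul, Polynomial.coeff_add, mul_comm, Polynomial.coeff_mul_X_pow']

lemma key : ∀ n k : ℕ, T (n + 1) k = (k : ℝ) * (P n).coeff k := by
  intro n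
  induction n with
  | zero =>
    intro k
    match k with
    | 0 => simp [T_k_zero]
    | 1 =>
      rw [T_rec 0 0]
      simp [T_zero, P, Polynomial.coeff_X]
    | (j + 2) =>
      rw [T_rec 0 (j + 1)]
      simp [T_zero, P, Polynomial.coeff_X]
  | succ n ih =>
    intro k
    match k with
    | 0 => simp [T_k_zero]
    | (j + 1) =>
      rw [T_rec (n + 1) j, ih j, ih (j + 2), coeff_P_succ]
      match j with
      | 0 =>
        simp [Polynomial.coeff_derivative]
        ring
      | (m + 1) =>
        have h2 : 2 ≤ m + 1 + 1 := by omega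
        rw [if_pos h2]
        simp only [Nat.add_sub_cancel, Polynomial.coeff_derivative]
        push_cast
        ring

lemma coeff_zero (n : ℕ) : (P n).coeff 0 = T n 1 := by
  cases n with
  | zero => simp [P, T_zero]
  | succ n =>
    rw [key n 1, coeff_P_succ]
    simp [Polynomial.coeff_derivative]

lemma deg (n : ℕ) : (P n).natDegree ≤ n + 1 := by
  induction n with
  | zero => simp [P]
  | succ n ih =>
    show ((1 + Polynomial.X ^ 2) * derivative (P n)).natDegree ≤ n + 2
    refine le_trans (Polynomial.natDegree_mul_le) ?_
    have h1 : (1 + Polynomial.X ^ 2 : Polynomial ℝ).natDegree ≤ 2 := by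
      refine le_trans (Polynomial.natDegree_add_le _ _) ?_
      simp [Polynomial.natDegree_X_pow]
    have h2 : (derivative (P n)).natDegree ≤ n := by
      refine le_trans (Polynomial.natDegree_derivative_le _) ?_
      omega
    omega

end TangentAux

theorem P_eq_tangent_numbers (n : ℕ) (x : ℝ) :
    (P n).eval x
      = T n 1 + ∑ k ∈ Finset.Icc 1 (n + 1), (1 / (k : ℝ)) * T (n + 1) k * x ^ k := by
  rw [Polynomial.eval_eq_sum_range' (n := n + 2) (by have := TangentAux.deg n; omega) x]
  have hset : Finset.range (n + 2) = insert 0 (Finset.Icc 1 (n + 1)) := by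
    ext m; simp; omega
  rw [hset, Finset.sum_insert (by simp)]
  congr 1
  · simp [TangentAux.coeff_zero n]
  · refine Finset.sum_congr rfl fun k hk => ?_
    have hk1 : 1 ≤ k := (Finset.mem_Icc.1 hk).1
    have hkne : (k : ℝ) ≠ 0 := Nat.cast_ne_zero.2 (by omega)
    rw [TangentAux.key n k]
    field_simp
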